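/- Let A ⊆ ℕⁿ be a finite set of multi-indices with cardinality r ≥ 1, let ε > 0 be a real number, and let u ∈ ℝ[X₁,…,Xₙ] be a polynomial whose support is contained in {α + β : α, β ∈ A} and whose coefficients all satisfy |u_γ| ≤ ε/r. Then the polynomial ε·Σ_{α∈A} X^{2α} + u is a sum of squares of polynomials with nonnegative real weights. -/

import Mathlib

open MvPolynomial

lemma aux_fin {ι : Type*} {n : ℕ} (I : Finset ι) (c : ι → ℝ)
    (s : ι → MvPolynomial (Fin n) ℝ) (hc : ∀ i ∈ I, 0 ≤ c i) :
    ∃ (N : ℕ) (c' : Fin N → ℝ) (s' : Fin N → MvPolynomial (Fin n) ℝ),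
      (∀ i, 0 ≤ c' i) ∧ ∑ i ∈ I, C (c i) * s i ^ 2 = ∑ j, C (c' j) * s' j ^ 2 := by
  classical
  refine ⟨I.card, fun j => c (I.equivFin.symm j), fun j => s (I.equivFin.symm j),
    fun j => hc _ (I.equivFin.symm j).2, ?_⟩
  rw [← Finset.sum_coe_sort I (fun i => C (c i) * s i ^ 2)]
  exact (Equiv.sum_comp I.equivFin.symm (fun i => C (c (i : ι)) * s (i : ι) ^ 2)).symm

/-- Correctness of the `absorb` step: if the support of `u` is contained in
`{α + β : α, β ∈ A}` and all coefficients of `u` satisfy `|u_γ| ≤ ε / #A`,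
then `ε·Σ_{α∈A} X^{2α} + u` is a weighted sum of squares. -/
theorem stmt4 (n : ℕ) (A : Finset (Fin n →₀ ℕ)) (hA : 1 ≤ A.card)
    (ε : ℝ) (hε : 0 < ε) (u : MvPolynomial (Fin n) ℝ)
    (hsupp : ∀ γ ∈ u.support, ∃ α ∈ A, ∃ β ∈ A, γ = α + β)
    (hcoeff : ∀ γ, |coeff γ u| ≤ ε / A.card) :
    ∃ (N : ℕ) (c : Fin N → ℝ) (s : Fin N → MvPolynomial (Fin n) ℝ),
      (∀ i, 0 ≤ c i) ∧
      C ε * (∑ α ∈ A, monomial (2 • α) (1 : ℝ)) + u = ∑ i, C (c i) * s i ^ 2 := by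
  classical
  set S := u.support with hS
  -- choice of decomposition γ = a γ + b γ
  have hchoice : ∀ γ ∈ S, ∃ p : (Fin n →₀ ℕ) × (Fin n →₀ ℕ),
      p.1 ∈ A ∧ p.2 ∈ A ∧ γ = p.1 + p.2 := by
    intro γ h
    obtain ⟨α, hα, β, hβ, hγ⟩ := hsupp γ h
    exact ⟨(α, β), hα, hβ, hγ⟩
  set a : (Fin n →₀ ℕ) → (Fin n →₀ ℕ) :=
    fun γ => if h : γ ∈ S then (hchoice γ h).choose.1 else 0 with ha_def
  set b : (Fin n →₀ ℕ) → (Fin n →₀ ℕ) :=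
    fun γ => if h : γ ∈ S then (hchoice γ h).choose.2 else 0 with hb_def
  have hab : ∀ γ ∈ S, a γ ∈ A ∧ b γ ∈ A ∧ γ = a γ + b γ := by
    intro γ h
    simp only [ha_def, hb_def, dif_pos h]
    exact (hchoice γ h).choose_spec
  -- sign
  set g : (Fin n →₀ ℕ) → ℝ := fun γ => if 0 ≤ coeff γ u then 1 else -1 with hg_def
  have hg2 : ∀ γ, g γ ^ 2 = 1 := by
    intro γ; simp only [hg_def]; split <;> norm_num
  have hgabs : ∀ γ, |coeff γ u| * g γ = coeff γ u := by
    intro γ; simp only [hg_def]; split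
    · rw [abs_of_nonneg ‹_›, mul_one]
    · rw [abs_of_neg (lt_of_not_ge ‹_›)]; ring
  set wa : (Fin n →₀ ℕ) → ℝ :=
    fun α => ∑ γ ∈ S.filter (fun γ => a γ = α), |coeff γ u| / 2 with hwa_def
  set wb : (Fin n →₀ ℕ) → ℝ :=
    fun α => ∑ γ ∈ S.filter (fun γ => b γ = α), |coeff γ u| / 2 with hwb_def
  set r : ℝ := (A.card : ℝ) with hr_def
  have hr0 : 0 < r := by
    simp only [hr_def]; exact_mod_cast lt_of_lt_of_le one_pos (by exact_mod_cast hA)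
  -- weight bounds
  have hwa_le : ∀ α, wa α ≤ ε / 2 := by
    intro α
    have hcard : (S.filter (fun γ => a γ = α)).card ≤ A.card := by
      apply Finset.card_le_card_of_injOn b
      · intro γ hγ
        exact (hab γ (Finset.mem_filter.mp hγ).1).2.1
      · intro γ hγ γ' hγ' hbb
        obtain ⟨hγS, hγa⟩ := Finset.mem_filter.mp hγ
        obtain ⟨hγ'S, hγ'a⟩ := Finset.mem_filter.mp hγ'
        rw [(hab γ hγS).2.2, (hab γ' hγ'S).2.2, hγa, hγ'a, hbb]
    calc wa α ≤ ∑ γ ∈ S.filter (fun γ => a γ = α), (ε / r) / 2 := by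
          apply Finset.sum_le_sum
          intro γ _
          exact div_le_div_of_nonneg_right (hcoeff γ) two_pos.le
      _ = (S.filter (fun γ => a γ = α)).card * ((ε / r) / 2) := by
          rw [Finset.sum_const, nsmul_eq_mul]
      _ ≤ r * ((ε / r) / 2) := by
          apply mul_le_mul_of_nonneg_right
          · rw [hr_def]; exact_mod_cast hcard
          · exact div_nonneg (div_nonneg hε.le hr0.le) two_pos.le
      _ = ε / 2 := by rw [div_div, ← mul_div_assoc, mul_div_mul_left ε 2 hr0.ne']
  have hwb_le : ∀ α, wb α ≤ ε / 2 := by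
    intro α
    have hcard : (S.filter (fun γ => b γ = α)).card ≤ A.card := by
      apply Finset.card_le_card_of_injOn a
      · intro γ hγ
        exact (hab γ (Finset.mem_filter.mp hγ).1).1
      · intro γ hγ γ' hγ' haa
        obtain ⟨hγS, hγb⟩ := Finset.mem_filter.mp hγ
        obtain ⟨hγ'S, hγ'b⟩ := Finset.mem_filter.mp hγ'
        rw [(hab γ hγS).2.2, (hab γ' hγ'S).2.2, hγb, hγ'b, haa]
    calc wb α ≤ ∑ γ ∈ S.filter (fun γ => b γ = α), (ε / r) / 2 := by
          apply Finset.sum_le_sum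
          intro γ _
          exact div_le_div_of_nonneg_right (hcoeff γ) two_pos.le
      _ = (S.filter (fun γ => b γ = α)).card * ((ε / r) / 2) := by
          rw [Finset.sum_const, nsmul_eq_mul]
      _ ≤ r * ((ε / r) / 2) := by
          apply mul_le_mul_of_nonneg_right
          · rw [hr_def]; exact_mod_cast hcard
          · exact div_nonneg (div_nonneg hε.le hr0.le) two_pos.le
      _ = ε / 2 := by rw [div_div, ← mul_div_assoc, mul_div_mul_left ε 2 hr0.ne']
  -- the indexed family of squares
  set c : (Fin n →₀ ℕ) ⊕ (Fin n →₀ ℕ) → ℝ :=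
    Sum.elim (fun γ => |coeff γ u| / 2) (fun α => ε - (wa α + wb α)) with hc_def
  set s : (Fin n →₀ ℕ) ⊕ (Fin n →₀ ℕ) → MvPolynomial (Fin n) ℝ :=
    Sum.elim (fun γ => monomial (a γ) 1 + C (g γ) * monomial (b γ) 1)
      (fun α => monomial α 1) with hs_def
  have hcnn : ∀ i ∈ S.disjSum A, 0 ≤ c i := by
    rintro (γ | α) _
    · simp only [hc_def, Sum.elim_inl]
      exact div_nonneg (abs_nonneg _) two_pos.le
    · simp only [hc_def, Sum.elim_inr, sub_nonneg]
      calc wa α + wb α ≤ ε / 2 + ε / 2 := add_le_add (hwa_le α) (hwb_le α)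
        _ = ε := by ring
  obtain ⟨N, c', s', hc', hsum⟩ := aux_fin (S.disjSum A) c s hcnn
  refine ⟨N, c', s', hc', ?_⟩
  rw [← hsum, Finset.sum_disjSum]
  -- compute each square term for γ ∈ S
  have hP : ∀ α : Fin n →₀ ℕ, (monomial α (1:ℝ)) ^ 2 = monomial (2 • α) 1 := by
    intro α
    rw [monomial_pow, one_pow]
  have hterm : ∀ γ ∈ S,
      C (c (Sum.inl γ)) * s (Sum.inl γ) ^ 2 =
        C (|coeff γ u| / 2) * monomial (2 • a γ) 1
        + C (|coeff γ u| / 2) * monomial (2 • b γ) 1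
        + monomial γ (coeff γ u) := by
    intro γ hγ
    simp only [hc_def, hs_def, Sum.elim_inl]
    have h1 : (monomial (a γ) (1:ℝ)) ^ 2 = monomial (2 • a γ) 1 := hP _
    have h2 : (C (g γ) * monomial (b γ) (1:ℝ)) ^ 2 = monomial (2 • b γ) 1 := by
      rw [mul_pow, ← C_pow, hg2, C_1, one_mul, hP]
    have h3 : monomial (a γ) (1:ℝ) * (C (g γ) * monomial (b γ) 1)
        = C (g γ) * monomial (a γ + b γ) 1 := by
      rw [mul_comm (C (g γ)), ← mul_assoc, monomial_mul, one_mul, mul_comm]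
    have hsq : (monomial (a γ) (1:ℝ) + C (g γ) * monomial (b γ) 1) ^ 2
        = monomial (2 • a γ) 1 + monomial (2 • b γ) 1
          + 2 * (C (g γ) * monomial (a γ + b γ) 1) := by
      rw [add_sq, h1, h2, mul_assoc, h3]; ring
    have h4 : C (|coeff γ u| / 2) * (2 * (C (g γ) * monomial (a γ + b γ) (1:ℝ)))
        = monomial γ (coeff γ u) := by
      rw [show (2 : MvPolynomial (Fin n) ℝ) = C 2 from (map_ofNat C 2).symm]
      rw [← mul_assoc, ← mul_assoc, ← C_mul, ← C_mul, C_mul_monomial, mul_one]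
      rw [show |coeff γ u| / 2 * 2 * g γ = |coeff γ u| * g γ by ring, hgabs, ← (hab γ hγ).2.2]
    rw [hsq, mul_add, mul_add, h4]
  rw [Finset.sum_congr rfl hterm]
  rw [Finset.sum_add_distrib, Finset.sum_add_distrib]
  have hfib_a : ∑ γ ∈ S, C (|coeff γ u| / 2) * monomial (2 • a γ) (1:ℝ)
      = ∑ α ∈ A, C (wa α) * monomial (2 • α) 1 := by
    rw [← Finset.sum_fiberwise_of_maps_to (fun γ hγ => (hab γ hγ).1)
      (fun γ => C (|coeff γ u| / 2) * monomial (2 • a γ) (1:ℝ))]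
    refine Finset.sum_congr rfl fun α _ => ?_
    rw [hwa_def, map_sum, Finset.sum_mul]
    refine Finset.sum_congr rfl fun γ hγ => ?_
    rw [(Finset.mem_filter.mp hγ).2]
  have hfib_b : ∑ γ ∈ S, C (|coeff γ u| / 2) * monomial (2 • b γ) (1:ℝ)
      = ∑ α ∈ A, C (wb α) * monomial (2 • α) 1 := by
    rw [← Finset.sum_fiberwise_of_maps_to (fun γ hγ => (hab γ hγ).2.1)
      (fun γ => C (|coeff γ u| / 2) * monomial (2 • b γ) (1:ℝ))]
    refine Finset.sum_congr rfl fun α _ => ?_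
    rw [hwb_def, map_sum, Finset.sum_mul]
    refine Finset.sum_congr rfl fun γ hγ => ?_
    rw [(Finset.mem_filter.mp hγ).2]
  rw [hfib_a, hfib_b, ← MvPolynomial.as_sum u]
  have hR : ∑ α ∈ A, C (c (Sum.inr α)) * s (Sum.inr α) ^ 2
      = C ε * ∑ α ∈ A, monomial (2 • α) (1:ℝ)
        - (∑ α ∈ A, C (wa α) * monomial (2 • α) 1 + ∑ α ∈ A, C (wb α) * monomial (2 • α) 1) := by
    rw [Finset.mul_sum, ← Finset.sum_add_distrib, ← Finset.sum_sub_distrib]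
    refine Finset.sum_congr rfl fun α _ => ?_
    simp only [hc_def, hs_def, Sum.elim_inr]
    rw [hP, map_sub, map_add]
    ring
  rw [hR]
  ring
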